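/- For every integer D > 2, consider p0(x) = x^{2D} + x^{D+1} + x^D + 1 with p1 = p0'. Then the next Sturm sequence element p2 = −((D−1)/(2D)) * x^{D+1} − (1/2) * x^D − 1, and the quotient q3 of p1 divided by p2 has degree D−2 and exactly D−1 monomial terms; consequently p3 := q3*p2 − p1 has degree D and at least D+1 monomial terms. -/

import Mathlib

open Polynomial Finset

noncomputable def Ssum (ρ : ℝ) (m : ℕ) : ℝ[X] := ∑ j ∈ Finset.range m, C (ρ^j) * X^(m-1-j)

lemma Ssum_succ (ρ : ℝ) (m : ℕ) : Ssum ρ (m+1) = X * Ssum ρ m + C (ρ^m) := by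
  unfold Ssum
  rw [Finset.sum_range_succ, Finset.mul_sum]
  congr 1
  · apply Finset.sum_congr rfl
    intro j hj
    rw [Finset.mem_range] at hj
    rw [show m + 1 - 1 - j = (m - 1 - j) + 1 by omega, pow_succ]
    ring
  · simp

lemma Ssum_key (a ρ : ℝ) (m : ℕ) :
    (C a * X - C (a*ρ)) * Ssum ρ m = C a * X^m - C (a * ρ^m) := by
  induction m with
  | zero => simp [Ssum]
  | succ n ih =>
    rw [Ssum_succ]
    have : (C a * X - C (a*ρ)) * (X * Ssum ρ n + C (ρ^n))
        = X * ((C a * X - C (a*ρ)) * Ssum ρ n) + (C a * X - C (a*ρ)) * C (ρ^n) := by ring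
    rw [this, ih]
    simp only [C_mul, C_pow]
    ring

lemma Ssum_coeff (ρ : ℝ) (m n : ℕ) :
    (Ssum ρ m).coeff n = if n < m then ρ^(m-1-n) else 0 := by
  unfold Ssum
  rw [finset_sum_coeff]
  simp only [coeff_C_mul, coeff_X_pow]
  by_cases h : n < m
  · rw [Finset.sum_eq_single (m-1-n)]
    · simp [show m-1-(m-1-n) = n by omega, h]
    · intro j hj hne
      rw [Finset.mem_range] at hj
      rw [if_neg, mul_zero]
      omega
    · intro h2; rw [Finset.mem_range] at h2; omega
  · rw [if_neg h, Finset.sum_eq_zero]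
    intro j hj; rw [Finset.mem_range] at hj
    rw [if_neg, mul_zero]
    omega

lemma Ssum_degree (ρ : ℝ) (m : ℕ) : (Ssum ρ m).degree ≤ (m - 1 : ℕ) := by
  refine (degree_sum_le _ _).trans ?_
  apply Finset.sup_le
  intro j hj
  refine (degree_C_mul_X_pow_le _ _).trans ?_
  exact_mod_cast (Nat.sub_le (m-1) j)

lemma divmod_unique (p d q r : ℝ[X]) (hd : d ≠ 0) (h : p = d * q + r)
    (hr : r.degree < d.degree) : p / d = q ∧ p % d = r := by
  have h1 : d * (p / d) + p % d = p := EuclideanDomain.div_add_mod p d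
  have hm : (p % d).degree < d.degree := EuclideanDomain.mod_lt _ hd
  have key : d * (q - p / d) = p % d - r := by
    have h2 := h1.trans h; linear_combination -h2
  have hq : q - p / d = 0 := by
    by_contra hne
    have h2 : d.degree ≤ (d * (q - p / d)).degree := by
      rw [degree_mul]
      exact le_add_of_nonneg_right (zero_le_degree_iff.2 hne)
    rw [key] at h2
    have : (p % d - r).degree < d.degree := lt_of_le_of_lt (degree_sub_le _ _) (max_lt hm hr)
    exact absurd h2 (not_le_of_gt this)
  refine ⟨(sub_eq_zero.mp hq).symm, ?_⟩
  rw [hq, mul_zero] at key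
  exact (sub_eq_zero.mp key.symm)

theorem stmt_10 (D : ℕ) (hD : 2 < D) :
    let p0 : Polynomial ℝ := X ^ (2 * D) + X ^ (D + 1) + X ^ D + 1
    let p1 : Polynomial ℝ := derivative p0
    let p2 : Polynomial ℝ := -(p0 % p1)
    let q3 : Polynomial ℝ := p1 / p2
    let p3 : Polynomial ℝ := q3 * p2 - p1
    p2 = C (-(((D : ℝ) - 1) / (2 * (D : ℝ)))) * X ^ (D + 1) +
        C (-(1 : ℝ) / 2) * X ^ D + C (-1 : ℝ) ∧
    q3.natDegree = D - 2 ∧ q3.support.card = D - 1 ∧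
    p3.natDegree = D ∧ D + 1 ≤ p3.support.card := by
  intro p0 p1 p2 q3 p3
  set d : ℝ := (D : ℝ) with hd_def
  have hd3 : (3:ℝ) ≤ d := by have h3 : (3:ℕ) ≤ D := hD; rw [hd_def]; exact_mod_cast h3
  have hd0 : d ≠ 0 := by linarith
  have hd1 : d - 1 ≠ 0 := by linarith
  -- explicit p1
  have hp1 : p1 = C (2*d) * X^(2*D-1) + C (d+1) * X^D + C d * X^(D-1) := by
    show derivative _ = _
    rw [derivative_add, derivative_add, derivative_add, derivative_one,
      derivative_X_pow, derivative_X_pow, derivative_X_pow]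
    push_cast
    rw [hd_def]
    ring
  set aa : ℝ := -((d - 1) / (2 * d)) with haa
  have haa0 : aa ≠ 0 := by
    have h1 : 0 < (d-1)/(2*d) := div_pos (by linarith) (by linarith)
    rw [haa]
    exact neg_ne_zero.2 (ne_of_gt h1)
  have h2d0 : (2:ℝ)*d ≠ 0 := by linarith
  have h2d0' : (2:ℝ)*d > 0 := by linarith
  -- degree of p1
  have hdegmono : (C (d+1) * X^D + C d * X^(D-1)).degree ≤ ((D:ℕ) : WithBot ℕ) := by
    refine (degree_add_le _ _).trans (max_le (degree_C_mul_X_pow_le _ _) ?_)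
    exact (degree_C_mul_X_pow_le _ _).trans (by exact_mod_cast (Nat.sub_le D 1))
  have hdegp1 : p1.degree = ((2*D-1 : ℕ) : WithBot ℕ) := by
    have h2 : (C (2*d) * X^(2*D-1) : ℝ[X]).degree = ((2*D-1:ℕ) : WithBot ℕ) :=
      degree_C_mul_X_pow _ h2d0
    rw [hp1, add_assoc, degree_add_eq_left_of_degree_lt, h2]
    rw [h2]
    refine lt_of_le_of_lt hdegmono ?_
    exact_mod_cast (by omega : D < 2*D-1)
  have hp1ne : p1 ≠ 0 := by
    intro h
    rw [h, degree_zero] at hdegp1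
    exact absurd hdegp1.symm (by simp)
  -- first division
  have e1 : (X:ℝ[X])^(2*D-1) * X = X^(2*D) := by
    rw [← pow_succ]; congr 1; omega
  have e2 : (X:ℝ[X])^(D-1) * X = X^D := by
    rw [← pow_succ]; congr 1; omega
  have c1 : C (2*d) * C (1/(2*d)) = (1:ℝ[X]) := by
    rw [← C_mul, mul_one_div, div_self h2d0, C_1]
  have c2 : C (d+1) * C (1/(2*d)) + C ((d-1)/(2*d)) = (1:ℝ[X]) := by
    rw [← C_mul, ← C_add, show (d+1)*(1/(2*d)) + (d-1)/(2*d) = 1 by field_simp; ring, C_1]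
  have c3 : C d * C (1/(2*d)) + C (1/2:ℝ) = (1:ℝ[X]) := by
    rw [← C_mul, ← C_add, show d*(1/(2*d)) + (1/2:ℝ) = 1 by field_simp; ring, C_1]
  have hID0 : p0 = p1 * (C (1/(2*d)) * X) +
      (C ((d-1)/(2*d)) * X^(D+1) + C (1/2:ℝ) * X^D + C 1) := by
    rw [hp1]
    show X ^ (2 * D) + X ^ (D + 1) + X ^ D + 1 = _
    linear_combination (-(C (2*d) * C (1/(2*d)))) * e1 + (-(C d * C (1/(2*d)))) * e2 -
      X^(2*D) * c1 - X^(D+1) * c2 - X^D * c3 - (C_1 : (C 1 : ℝ[X]) = 1)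
  have hrdeg0 : (C ((d-1)/(2*d)) * X^(D+1) + C (1/2:ℝ) * X^D + C 1 : ℝ[X]).degree
      < p1.degree := by
    rw [hdegp1]
    refine lt_of_le_of_lt ?_ (show ((D+1:ℕ) : WithBot ℕ) < ((2*D-1:ℕ) : WithBot ℕ) from by
      exact_mod_cast (by omega : D+1 < 2*D-1))
    refine (degree_add_le _ _).trans (max_le ((degree_add_le _ _).trans
      (max_le (degree_C_mul_X_pow_le _ _)
        ((degree_C_mul_X_pow_le _ _).trans (by exact_mod_cast (by omega : D ≤ D+1))))) ?_)
    exact degree_C_le.trans (by exact_mod_cast (Nat.zero_le (D+1)))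
  obtain ⟨hdiv0, hmod0⟩ := divmod_unique p0 p1 (C (1/(2*d)) * X) _ hp1ne hID0 hrdeg0
  -- explicit p2
  have hp2 : p2 = C aa * X^(D+1) + C (-(1:ℝ)/2) * X^D + C (-1:ℝ) := by
    show -(p0 % p1) = _
    rw [hmod0, haa]
    rw [show (-((d-1)/(2*d))) = -((d-1)/(2*d)) from rfl, map_neg,
      show (-(1:ℝ)/2) = -(1/2:ℝ) by norm_num, map_neg,
      show (-1:ℝ) = -(1:ℝ) from rfl, map_neg]
    ring
  -- setup for second division
  set rr : ℝ := -(d/(d-1)) with hrr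
  set AA : ℝ := 2*d/aa with hAA
  set u : ℝ := d+1+2*d*rr^(D-1) with hu
  have hAamul : AA * aa = 2*d := div_mul_cancel₀ _ haa0
  have hrr0 : rr ≠ 0 := by
    have h1 : 0 < d/(d-1) := div_pos (by linarith) (by linarith)
    rw [hrr]; exact neg_ne_zero.2 (ne_of_gt h1)
  have hAA0 : AA ≠ 0 := div_ne_zero h2d0 haa0
  have haarr : aa * rr = 1/2 := by rw [haa, hrr]; field_simp
  -- degree of p2
  have hdegp2 : p2.degree = ((D+1 : ℕ) : WithBot ℕ) := by
    have h2 : (C aa * X^(D+1) : ℝ[X]).degree = ((D+1:ℕ) : WithBot ℕ) :=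
      degree_C_mul_X_pow _ haa0
    rw [hp2, add_assoc, degree_add_eq_left_of_degree_lt, h2]
    rw [h2]
    refine lt_of_le_of_lt ?_ (show ((D:ℕ) : WithBot ℕ) < ((D+1:ℕ) : WithBot ℕ) from by
      exact_mod_cast (by omega : D < D+1))
    refine (degree_add_le _ _).trans (max_le (degree_C_mul_X_pow_le _ _) ?_)
    exact degree_C_le.trans (by exact_mod_cast (Nat.zero_le D))
  have hp2ne : p2 ≠ 0 := by
    intro h
    rw [h, degree_zero] at hdegp2
    exact absurd hdegp2.symm (by simp)
  -- second division identity
  have E1 := Ssum_key aa rr (D-1)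
  have E2 : (X:ℝ[X])^D * X^(D-1) = X^(2*D-1) := by
    rw [← pow_add]; congr 1; omega
  have E3 : (C (-(1:ℝ)/2) : ℝ[X]) = - C (aa*rr) := by
    rw [haarr, show (-(1:ℝ)/2) = -(1/2:ℝ) by norm_num, map_neg]
  have E4 : C AA * C aa = (C (2*d) : ℝ[X]) := by rw [← C_mul, hAamul]
  have E5 : (C u : ℝ[X]) = C (d+1) + C (2*d) * C (rr^(D-1)) := by
    rw [← C_mul, ← C_add, hu]
  have E6 : C AA * C (aa*rr^(D-1)) = (C (2*d) : ℝ[X]) * C (rr^(D-1)) := by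
    rw [← C_mul, ← C_mul, ← mul_assoc, hAamul]
  have E7 : (C (-1:ℝ) : ℝ[X]) = -1 := by simp
  have hID2 : p1 = p2 * (C AA * Ssum rr (D-1)) +
      (C u * X^D + C d * X^(D-1) + C AA * Ssum rr (D-1)) := by
    rw [hp1, hp2]
    linear_combination (-(C AA * Ssum rr (D-1) * X^D)) * E3 - (C AA * Ssum rr (D-1)) * E7 -
      (C AA * X^D) * E1 - (C AA * C aa) * E2 - X^(2*D-1) * E4 - X^D * E5 + X^D * E6
  have hrdeg2 : (C u * X^D + C d * X^(D-1) + C AA * Ssum rr (D-1) : ℝ[X]).degree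
      < p2.degree := by
    rw [hdegp2]
    refine lt_of_le_of_lt ?_ (show ((D:ℕ) : WithBot ℕ) < ((D+1:ℕ) : WithBot ℕ) from by
      exact_mod_cast (by omega : D < D+1))
    refine (degree_add_le _ _).trans (max_le ((degree_add_le _ _).trans
      (max_le (degree_C_mul_X_pow_le _ _)
        ((degree_C_mul_X_pow_le _ _).trans (by exact_mod_cast (Nat.sub_le D 1))))) ?_)
    refine (degree_mul_le _ _).trans ?_
    refine (add_le_add degree_C_le (Ssum_degree rr (D-1))).trans ?_
    rw [zero_add]
    exact_mod_cast (by omega : D-1-1 ≤ D)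
  obtain ⟨hdiv2, hmod2⟩ := divmod_unique p1 p2 (C AA * Ssum rr (D-1)) _ hp2ne hID2 hrdeg2
  have hq3 : q3 = C AA * Ssum rr (D-1) := hdiv2
  have hp3 : p3 = -(C u * X^D + C d * X^(D-1) + C AA * Ssum rr (D-1)) := by
    show q3 * p2 - p1 = _
    rw [hq3, hID2]
    ring
  -- u ≠ 0
  have hu0 : u ≠ 0 := by
    have habs : (1:ℝ) ≤ |rr| := by
      rw [hrr, abs_neg, abs_of_pos (div_pos (by linarith) (by linarith))]
      rw [le_div_iff₀ (by linarith)]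
      linarith
    have hpow : (1:ℝ) ≤ |rr^(D-1)| := by
      rw [abs_pow]; exact one_le_pow₀ habs
    intro h0
    rw [hu] at h0
    rcases le_abs.mp hpow with ht | ht
    · nlinarith
    · nlinarith
  -- coefficients of q3
  have hq3coeff : ∀ n, q3.coeff n = AA * (if n < D-1 then rr^(D-1-1-n) else 0) := by
    intro n
    rw [hq3, coeff_C_mul, Ssum_coeff]
  -- q3 natDegree
  have hq3deg : q3.natDegree = D - 2 := by
    apply le_antisymm
    · refine natDegree_le_iff_coeff_eq_zero.2 ?_
      intro N hN
      rw [hq3coeff, if_neg (by omega), mul_zero]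
    · apply le_natDegree_of_ne_zero (n := D-2)
      rw [hq3coeff, if_pos (by omega), show D-1-1-(D-2) = 0 by omega, pow_zero, mul_one]
      exact hAA0
  -- q3 support
  have hq3supp : q3.support = Finset.range (D-1) := by
    ext n
    rw [mem_support_iff, Finset.mem_range, hq3coeff]
    by_cases h : n < D-1 <;> simp [h, hAA0, pow_ne_zero _ hrr0]
  -- coefficients of p3
  have hp3coeff : ∀ n, p3.coeff n = -((if n = D then u else 0) + (if n = D-1 then d else 0) +
      AA * (if n < D-1 then rr^(D-1-1-n) else 0)) := by
    intro n
    rw [hp3]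
    rw [coeff_neg, coeff_add, coeff_add, coeff_C_mul, coeff_C_mul, coeff_X_pow, coeff_X_pow,
      coeff_C_mul, Ssum_coeff]
    by_cases h1 : n = D <;> by_cases h2 : n = D-1 <;> simp [h1, h2, mul_ite]
  have hp3degle : p3.natDegree ≤ D := by
    refine natDegree_le_iff_coeff_eq_zero.2 ?_
    intro N hN
    rw [hp3coeff, if_neg (by omega), if_neg (by omega), if_neg (by omega)]
    simp
  have hp3D : p3.coeff D ≠ 0 := by
    rw [hp3coeff, if_pos rfl, if_neg (by omega), if_neg (by omega)]
    simpa using hu0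
  have hp3deg : p3.natDegree = D := le_antisymm hp3degle (le_natDegree_of_ne_zero hp3D)
  -- p3 support
  have hp3supp : Finset.range (D+1) ⊆ p3.support := by
    intro n hn
    rw [Finset.mem_range] at hn
    rw [mem_support_iff, hp3coeff]
    by_cases h1 : n = D
    · rw [if_pos h1, if_neg (by omega), if_neg (by omega)]
      simpa using hu0
    · by_cases h2 : n = D-1
      · rw [if_neg h1, if_pos h2, if_neg (by omega)]
        simp only [mul_zero, zero_add, add_zero, neg_ne_zero]
        linarith
      · rw [if_neg h1, if_neg h2, if_pos (by omega)]
        simp only [zero_add, neg_ne_zero]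
        exact mul_ne_zero hAA0 (pow_ne_zero _ hrr0)
  refine ⟨hp2, hq3deg, by rw [hq3supp, Finset.card_range], hp3deg, ?_⟩
  calc D + 1 = (Finset.range (D+1)).card := (Finset.card_range _).symm
    _ ≤ p3.support.card := Finset.card_le_card hp3supp
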